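/- For any (x,y) ∈ R², the characteristic polynomial p(λ) = λ² - b(q x^{q-1} - 1)λ - a of the Jacobian of T at (x,y) has two roots λ_min, λ_max ∈ K with |λ_min| = |a|/|b| < 1 and |λ_max| = |b| > 1. -/

import Mathlib

open scoped Classical
open MeasureTheory Filter

noncomputable section

/-- A complete, locally compact non-Archimedean field with residue field of
order `q`, absolute value normalized so that a uniformizer has norm `1/q`.
`reps` is a set of `q` coset representatives for the residue field: they cover
the ring of integers by discs of radius `1/q` and are pairwise at distance
`> 1/q`. -/
structure NAField (K : Type*) [NormedField K] where
  na : IsNonarchimedean (fun x : K => ‖x‖)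
  complete : CompleteSpace K
  locCompact : LocallyCompactSpace K
  q : ℕ
  one_lt_q : 1 < q
  valGroup : ∀ x : K, x ≠ 0 → ∃ n : ℤ, ‖x‖ = (q : ℝ) ^ n
  exists_unif : ∃ ϖ : K, ‖ϖ‖ = (q : ℝ)⁻¹
  reps : Finset K
  card_reps : reps.card = q
  norm_reps : ∀ s ∈ reps, ‖s‖ ≤ 1
  reps_cover : ∀ x : K, ‖x‖ ≤ 1 → ∃ s ∈ reps, ‖x - s‖ ≤ (q : ℝ)⁻¹
  reps_sep : ∀ s ∈ reps, ∀ t ∈ reps, s ≠ t → (q : ℝ)⁻¹ < ‖s - t‖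

variable {K : Type*} [NormedField K]

/-- `f : R → R` is `(1/q)`-Lipschitz on the ring of integers. -/
def NAField.IsLip (F : NAField K) (f : K → K) : Prop :=
  (∀ t : K, ‖t‖ ≤ 1 → ‖f t‖ ≤ 1) ∧
  ∀ t₁ t₂ : K, ‖t₁‖ ≤ 1 → ‖t₂‖ ≤ 1 → ‖f t₁ - f t₂‖ ≤ ((F.q : ℝ))⁻¹ * ‖t₁ - t₂‖

/-- The unit polydisc `R² ⊆ K²`. -/
def unitPoly (K : Type*) [NormedField K] : Set (K × K) := {p | ‖p.1‖ ≤ 1 ∧ ‖p.2‖ ≤ 1}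

/-- Horizontal `δ`-neighborhood `H_δ(f) = {(t, f t + θ) : t ∈ R, |θ| ≤ δ}`. -/
def Hnbhd (f : K → K) (δ : ℝ) : Set (K × K) :=
  {p | ∃ t θ : K, ‖t‖ ≤ 1 ∧ ‖θ‖ ≤ δ ∧ p = (t, f t + θ)}

/-- Vertical `δ`-neighborhood `V_δ(f) = {(f t + θ, t) : t ∈ R, |θ| ≤ δ}`. -/
def Vnbhd (f : K → K) (δ : ℝ) : Set (K × K) :=
  {p | ∃ t θ : K, ‖t‖ ≤ 1 ∧ ‖θ‖ ≤ δ ∧ p = (f t + θ, t)}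

/-- The automorphism `T(x,y) = (a y + b (x^q - x), x)`. -/
def NAField.Tmap (F : NAField K) (a b : K) : K × K → K × K :=
  fun p => (a * p.2 + b * (p.1 ^ F.q - p.1), p.1)

/-- The inverse automorphism `T⁻¹(x,y) = (y, a⁻¹ (x - b (y^q - y)))`. -/
def NAField.Tinv (F : NAField K) (a b : K) : K × K → K × K :=
  fun p => (p.2, a⁻¹ * (p.1 - b * (p.2 ^ F.q - p.2)))

/-- The attractor `A_T = ⋂_{n ≥ 1} Tⁿ(R²)`. -/
def NAField.Attractor (F : NAField K) (a b : K) : Set (K × K) :=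
  ⋂ n ∈ {n : ℕ | 1 ≤ n}, (F.Tmap a b)^[n] '' unitPoly K

/-- The basin of attraction `B_T = ⋃_{n ≥ 1} T⁻ⁿ(R²)`. -/
def NAField.Basin (F : NAField K) (a b : K) : Set (K × K) :=
  ⋃ n ∈ {n : ℕ | 1 ≤ n}, (F.Tmap a b)^[n] ⁻¹' unitPoly K

/-- `T^k` for `k : ℤ`. -/
def NAField.iterZ (F : NAField K) (a b : K) (k : ℤ) : K × K → K × K :=
  if 0 ≤ k then (F.Tmap a b)^[k.toNat] else (F.Tinv a b)^[(-k).toNat]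

/-- The image under the conjugacy `ω` of the cylinder set of bisequences
agreeing with `s` on coordinates `-M, …, M`: points of the attractor whose
itinerary through the residue strips matches `s` on those coordinates. -/
def NAField.Cyl (F : NAField K) (a b : K) (s : ℤ → K) (M : ℕ) : Set (K × K) :=
  {p | p ∈ F.Attractor a b ∧
    ∀ k : ℤ, |k| ≤ (M : ℤ) → ‖(F.iterZ a b k p).1 - s k‖ ≤ ((F.q : ℝ))⁻¹}
lemma na_norm_sub_eq {K : Type*} [NormedField K]
    (hna : IsNonarchimedean (fun x : K => ‖x‖)) {u v : K} (h : ‖u‖ < ‖v‖) :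
    ‖u - v‖ = ‖v‖ := by
  have h1 : ‖u - v‖ ≤ ‖v‖ := by
    have := hna u (-v)
    simp only [norm_neg, sub_eq_add_neg] at this ⊢
    exact this.trans (max_le h.le le_rfl)
  have h2 : ‖v‖ ≤ ‖u - v‖ := by
    have := hna u (-(u - v))
    simp only [norm_neg] at this
    have huv : u + -(u - v) = v := by ring
    rw [huv] at this
    rcases max_cases ‖u‖ ‖u - v‖ with ⟨he, _⟩ | ⟨he, _⟩
    · rw [he] at this; linarith
    · rwa [he] at this
  linarith

lemma NAField.norm_q_le {K : Type*} [NormedField K] (F : NAField K) :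
    ‖(F.q : K)‖ ≤ (F.q : ℝ)⁻¹ := by
  classical
  let A : AddSubgroup K :=
    { carrier := {x : K | ‖x‖ ≤ 1}
      zero_mem' := by simp
      add_mem' := fun {x y} hx hy => le_trans (F.na x y) (max_le hx hy)
      neg_mem' := fun {x} hx => by simpa using hx }
  let B : AddSubgroup A :=
    { carrier := {x : A | ‖(x : K)‖ ≤ (F.q : ℝ)⁻¹}
      zero_mem' := by simp
      add_mem' := fun {x y} hx hy => le_trans (F.na (x : K) (y : K)) (max_le hx hy)
      neg_mem' := fun {x} hx => by simpa using hx }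
  have hmemB : ∀ z : A, z ∈ B ↔ ‖(z : K)‖ ≤ (F.q : ℝ)⁻¹ := fun z => Iff.rfl
  have hcoeA : ∀ (u v : A), ((-u + v : A) : K) = (v : K) - (u : K) := by
    intro u v
    push_cast
    ring
  let φ : {s // s ∈ F.reps} → A ⧸ B := fun s =>
    QuotientAddGroup.mk ⟨s.1, F.norm_reps s.1 s.2⟩
  have hinj : Function.Injective φ := by
    rintro ⟨s, hs⟩ ⟨t, ht⟩ hst
    have h := (QuotientAddGroup.eq (s := B)).mp hst
    rw [hmemB, hcoeA] at h
    by_contra hne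
    have hne' : s ≠ t := by simpa using hne
    have := F.reps_sep s hs t ht hne'
    rw [← norm_neg, neg_sub] at this
    simp only at h
    linarith
  have hsurj : Function.Surjective φ := by
    intro z
    induction z using QuotientAddGroup.induction_on with
    | H z =>
      obtain ⟨zv, hz⟩ := z
      obtain ⟨s, hs, hxs⟩ := F.reps_cover zv hz
      refine ⟨⟨s, hs⟩, ?_⟩
      refine (QuotientAddGroup.eq (s := B)).mpr ?_
      rw [hmemB, hcoeA]
      exact hxs
  have hcard : Nat.card (A ⧸ B) = F.q := by
    rw [← Nat.card_congr (Equiv.ofBijective φ ⟨hinj, hsurj⟩)]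
    simp [Nat.card_eq_fintype_card, Fintype.card_coe, F.card_reps]
  have h1A : (1 : K) ∈ A := by simp [A]
  have key : Nat.card (A ⧸ B) • (QuotientAddGroup.mk ⟨1, h1A⟩ : A ⧸ B) = 0 :=
    card_nsmul_eq_zero'
  rw [hcard] at key
  have hz : QuotientAddGroup.mk (F.q • (⟨1, h1A⟩ : A)) = (0 : A ⧸ B) := by
    rw [← key, ← QuotientAddGroup.mk_nsmul B (⟨1, h1A⟩ : A) F.q]
  have hmem := (QuotientAddGroup.eq_zero_iff _).mp hz
  rw [hmemB] at hmem
  have hcoe : ((F.q • (⟨1, h1A⟩ : A) : A) : K) = (F.q : K) := by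
    push_cast
    simp [nsmul_eq_mul]
  rwa [hcoe] at hmem

theorem stmt7 (F : NAField K) (a b : K) (ha0 : a ≠ 0) (ha : ‖a‖ < 1)
    (hb : ‖b‖ = (F.q : ℝ)) (x y : K) (hx : ‖x‖ ≤ 1) (hy : ‖y‖ ≤ 1) :
    ∃ lmin lmax : K,
      lmin ^ 2 - b * ((F.q : K) * x ^ (F.q - 1) - 1) * lmin - a = 0 ∧
      lmax ^ 2 - b * ((F.q : K) * x ^ (F.q - 1) - 1) * lmax - a = 0 ∧
      ‖lmin‖ = ‖a‖ / ‖b‖ ∧ ‖lmax‖ = ‖b‖ ∧ ‖lmin‖ < 1 ∧ 1 < ‖lmax‖ := by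
  haveI := F.complete
  have hq1 : (1:ℝ) < F.q := by exact_mod_cast F.one_lt_q
  have hb1 : (1:ℝ) < ‖b‖ := by rw [hb]; exact hq1
  have hb0 : (0:ℝ) < ‖b‖ := lt_trans one_pos hb1
  have hqK : ‖(F.q : K)‖ ≤ (F.q : ℝ)⁻¹ := F.norm_q_le
  set c := b * ((F.q : K) * x ^ (F.q - 1) - 1) with hc_def
  have hsmall : ‖(F.q : K) * x ^ (F.q - 1)‖ < 1 := by
    rw [norm_mul, norm_pow]
    calc ‖(F.q : K)‖ * ‖x‖ ^ (F.q - 1)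
        ≤ (F.q : ℝ)⁻¹ * 1 := by
          apply mul_le_mul hqK (pow_le_one₀ (norm_nonneg x) hx)
            (by positivity) (by positivity)
      _ < 1 := by rw [mul_one]; exact inv_lt_one_of_one_lt₀ hq1
  have hunit : ‖(F.q : K) * x ^ (F.q - 1) - 1‖ = 1 := by
    have h1 : ‖(F.q : K) * x ^ (F.q - 1)‖ < ‖(1 : K)‖ := by rwa [norm_one]
    rw [na_norm_sub_eq F.na h1, norm_one]
  have hcnorm : ‖c‖ = ‖b‖ := by rw [hc_def, norm_mul, hunit, mul_one]
  have hc0 : c ≠ 0 := by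
    intro h; rw [h, norm_zero] at hcnorm; linarith
  set r : ℝ := ‖a‖ / ‖b‖ with hr_def
  have ha0' : (0:ℝ) < ‖a‖ := norm_pos_iff.mpr ha0
  have hr0 : 0 < r := div_pos ha0' hb0
  have hrlt1 : r < 1 := by
    rw [hr_def, div_lt_one hb0]; linarith
  have hrle : ∀ z : K, ‖z‖ ≤ r → ‖z‖ ^ 2 ≤ ‖a‖ := by
    intro z hz
    have h1 : ‖z‖ ^ 2 ≤ r ^ 2 := pow_le_pow_left₀ (norm_nonneg z) hz 2
    have h2 : r ^ 2 ≤ ‖a‖ := by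
      rw [hr_def, div_pow, div_le_iff₀ (by positivity)]
      have hbsq : (1:ℝ) ≤ ‖b‖ ^ 2 := by nlinarith
      nlinarith [ha0'.le, ha.le, hbsq]
    linarith
  set S := Metric.closedBall (0 : K) r with hS
  haveI : CompleteSpace S := Metric.isClosed_closedBall.completeSpace_coe
  haveI : Nonempty S := ⟨⟨0, by simp [hS, hr0.le]⟩⟩
  have hmemS : ∀ z : K, z ∈ S ↔ ‖z‖ ≤ r := by
    intro z; rw [hS, Metric.mem_closedBall, dist_zero_right]
  have hmap : ∀ z : K, ‖z‖ ≤ r → ‖(z ^ 2 - a) / c‖ ≤ r := by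
    intro z hz
    rw [norm_div, hcnorm, hr_def, div_le_div_iff₀ hb0 hb0]
    apply mul_le_mul_of_nonneg_right _ hb0.le
    have hna := F.na (z ^ 2) (-a)
    simp only [norm_neg, ← sub_eq_add_neg] at hna
    refine hna.trans (max_le ?_ le_rfl)
    rw [norm_pow]; exact hrle z hz
  set g : S → S := fun z => ⟨(z.1 ^ 2 - a) / c, by
    rw [hmemS]; exact hmap z.1 ((hmemS z.1).mp z.2)⟩ with hg_def
  set L : NNReal := ⟨r / ‖b‖, by positivity⟩ with hL_def
  have hLip : LipschitzWith L g := by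
    apply LipschitzWith.of_dist_le_mul
    rintro ⟨z, hz⟩ ⟨w, hw⟩
    have hz' := (hmemS z).mp hz
    have hw' := (hmemS w).mp hw
    show dist ((z ^ 2 - a) / c) ((w ^ 2 - a) / c) ≤ (r / ‖b‖) * dist z w
    rw [dist_eq_norm, dist_eq_norm, div_sub_div_same, norm_div, hcnorm]
    have hfac : z ^ 2 - a - (w ^ 2 - a) = (z + w) * (z - w) := by ring
    rw [hfac, norm_mul, div_le_iff₀ hb0, div_mul_eq_mul_div,
      div_mul_eq_mul_div, le_div_iff₀ hb0]
    have hzw : ‖z + w‖ ≤ r := (F.na z w).trans (max_le hz' hw')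
    calc ‖z + w‖ * ‖z - w‖ * ‖b‖ ≤ r * ‖z - w‖ * ‖b‖ := by
          apply mul_le_mul_of_nonneg_right _ hb0.le
          exact mul_le_mul_of_nonneg_right hzw (norm_nonneg _)
      _ = r * ‖z - w‖ * ‖b‖ := rfl
  have hL1 : (L : ℝ) < 1 := by
    show r / ‖b‖ < 1
    rw [div_lt_one hb0]; linarith
  have hcontr : ContractingWith L g := ⟨by exact_mod_cast hL1, hLip⟩
  set z₀ := ContractingWith.fixedPoint g hcontr with hz₀
  have hfix : g z₀ = z₀ := hcontr.fixedPoint_isFixedPt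
  set lmin : K := z₀.1 with hlmin
  have hfix' : (lmin ^ 2 - a) / c = lmin := congrArg Subtype.val hfix
  have hroot : lmin ^ 2 - c * lmin - a = 0 := by
    field_simp at hfix'
    linear_combination hfix'
  have hlminle : ‖lmin‖ ≤ r := (hmemS lmin).mp z₀.2
  have hlminlt : ‖lmin‖ < ‖c‖ := by
    rw [hcnorm]
    calc ‖lmin‖ ≤ r := hlminle
      _ < 1 := hrlt1
      _ < ‖b‖ := hb1
  have hsubc : ‖lmin - c‖ = ‖c‖ := na_norm_sub_eq F.na hlminlt
  have hprod : lmin * (lmin - c) = a := by linear_combination hroot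
  have hnmin : ‖lmin‖ = ‖a‖ / ‖b‖ := by
    have h := congrArg (fun t => ‖t‖) hprod
    simp only [norm_mul] at h
    rw [hsubc, hcnorm] at h
    rw [eq_div_iff (ne_of_gt hb0)]
    exact h
  set lmax : K := c - lmin with hlmax
  have hrootmax : lmax ^ 2 - c * lmax - a = 0 := by
    rw [hlmax]; linear_combination hroot
  have hnmax : ‖lmax‖ = ‖b‖ := by
    rw [hlmax, ← norm_neg, neg_sub, hsubc, hcnorm]
  refine ⟨lmin, lmax, hroot, hrootmax, hnmin, hnmax, ?_, ?_⟩
  · rw [hnmin, ← hr_def]; exact hrlt1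
  · rw [hnmax]; exact hb1
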